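/- Let G be a connected finite simple graph with at least two vertices, with Laplacian L_G and normalized Laplacian L̂_G, and let L_G^† and L̂_G^† denote their Moore–Penrose pseudoinverses. Then for all vertices u, v: L_G^†(u,u) + L_G^†(v,v) − 2 L_G^†(u,v) = deg_G(u)^{−1} L̂_G^†(u,u) + deg_G(v)^{−1} L̂_G^†(v,v) − 2 (deg_G(u) deg_G(v))^{−1/2} L̂_G^†(u,v). (The resistance distance can be expressed through the pseudoinverse of the normalized Laplacian and vertex degrees.) -/

import Mathlib

open scoped Classical
open Matrix BigOperators

noncomputable section

namespace EPWL

/-! ### Generic node-coloring refinement with pairwise features in a type `α` -/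

/-- The common nested type of round-`l` colors: `C 0 = Unit`,
`C (l+1) = C l × Multiset (C l × α)`. -/
def Color (α : Type) : ℕ → Type
  | 0 => Unit
  | l + 1 => Color α l × Multiset (Color α l × α)

/-- The color refinement: `χ⁰(u) = ()` and
`χ^{l+1}(u) = (χ^l(u), {{(χ^l(v), f u v) : v}})`. -/
def colorFn {V : Type*} [Fintype V] {α : Type} (f : V → V → α) :
    (l : ℕ) → V → Color α l
  | 0 => fun _ => ()
  | l + 1 => fun u =>
      (colorFn f l u, Finset.univ.val.map fun v => (colorFn f l v, f u v))

/-- Two graphs (presented through their pairwise-feature functions) are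
indistinguishable by the node-coloring refinement: at every round, the
multisets of node colors agree. -/
def NodeIndist {V W : Type*} [Fintype V] [Fintype W] {α : Type}
    (f : V → V → α) (g : W → W → α) : Prop :=
  ∀ l : ℕ, Finset.univ.val.map (colorFn f l) = Finset.univ.val.map (colorFn g l)

/-- Atomic type of an ordered vertex pair: `0` if equal, `1` if adjacent,
`2` otherwise. -/
def atp {V : Type*} (G : SimpleGraph V) (u v : V) : ℕ :=
  if u = v then 0 else if G.Adj u v then 1 else 2

/-- 1-WL indistinguishability. -/
def WL1Indist {V W : Type*} [Fintype V] [Fintype W]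
    (G : SimpleGraph V) (H : SimpleGraph W) : Prop :=
  NodeIndist (atp G) (atp H)

/-! ### Graph matrices -/

/-- Real adjacency matrix. -/
def adjM {V : Type*} [Fintype V] (G : SimpleGraph V) : Matrix V V ℝ :=
  G.adjMatrix ℝ

/-- Real (diagonal) degree matrix. -/
def degM {V : Type*} [Fintype V] (G : SimpleGraph V) : Matrix V V ℝ :=
  Matrix.diagonal fun v => (G.degree v : ℝ)

/-- Laplacian matrix `L = D - A`. -/
def lapM {V : Type*} [Fintype V] (G : SimpleGraph V) : Matrix V V ℝ :=
  degM G - adjM G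

/-- The diagonal matrix `D^{-1/2}`. -/
def invSqrtDegM {V : Type*} [Fintype V] (G : SimpleGraph V) : Matrix V V ℝ :=
  Matrix.diagonal fun v => (Real.sqrt (G.degree v))⁻¹

/-- Normalized Laplacian `L̂ = D^{-1/2} L D^{-1/2}`. -/
def normLapM {V : Type*} [Fintype V] (G : SimpleGraph V) : Matrix V V ℝ :=
  invSqrtDegM G * lapM G * invSqrtDegM G

/-- Normalized adjacency matrix `Â = D^{-1/2} A D^{-1/2}`. -/
def normAdjM {V : Type*} [Fintype V] (G : SimpleGraph V) : Matrix V V ℝ :=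
  invSqrtDegM G * adjM G * invSqrtDegM G

/-- The diagonal matrix `D⁻¹` of inverse degrees. -/
def invDegM {V : Type*} [Fintype V] (G : SimpleGraph V) : Matrix V V ℝ :=
  Matrix.diagonal fun v => ((G.degree v : ℝ))⁻¹

/-- The random-walk matrix `D⁻¹ A`. -/
def rwM {V : Type*} [Fintype V] (G : SimpleGraph V) : Matrix V V ℝ :=
  invDegM G * adjM G

/-- The all-ones matrix `J`. -/
def allOnes (V : Type*) : Matrix V V ℝ := Matrix.of fun _ _ => 1

/-- A choice among the three graph matrices `A`, `L`, `L̂`. -/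
inductive MatChoice | adj | lap | normLap

/-- The graph matrix associated with a choice. -/
def matOf {V : Type*} [Fintype V] (c : MatChoice) (G : SimpleGraph V) :
    Matrix V V ℝ :=
  match c with
  | .adj => adjM G
  | .lap => lapM G
  | .normLap => normLapM G

/-! ### Spectral decompositions and the eigenspace projection invariant -/

/-- `IsSpectralDecomp M Λ P` says: `Λ` is the (finite) set of distinct
eigenvalues of the symmetric matrix `M` and, for `lam ∈ Λ`, `P lam` is the
orthogonal projection onto the eigenspace of `lam`. This is characterized
uniquely by: the `P lam` are symmetric idempotent nonzero matrices,
pairwise "orthogonal" (`P lam * P mu = 0` for `lam ≠ mu`), summing to the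
identity, with `∑ lam • P lam = M`. -/
structure IsSpectralDecomp {n : Type*} [Fintype n]
    (M : Matrix n n ℝ) (Λ : Finset ℝ) (P : ℝ → Matrix n n ℝ) : Prop where
  symm : ∀ lam ∈ Λ, (P lam)ᵀ = P lam
  idem : ∀ lam ∈ Λ, P lam * P lam = P lam
  nonzero : ∀ lam ∈ Λ, P lam ≠ 0
  orth : ∀ lam ∈ Λ, ∀ mu ∈ Λ, lam ≠ mu → P lam * P mu = 0
  sum_one : ∑ lam ∈ Λ, P lam = 1
  sum_smul : ∑ lam ∈ Λ, lam • P lam = M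

/-- The eigenspace projection invariant
`𝒫^M(u,v) = {{(lam, P_lam(u,v)) : lam eigenvalue of M}}`. -/
def projInv {n : Type*} (Λ : Finset ℝ) (P : ℝ → Matrix n n ℝ) (u v : n) :
    Multiset (ℝ × ℝ) :=
  Λ.val.map fun lam => (lam, P lam u v)

/-! ### Subgraph Weisfeiler-Lehman variants (SWL, PSWL) and 3-WL -/

/-- Round-`l` color type for SWL. -/
def SColor : ℕ → Type
  | 0 => ℕ
  | l + 1 => SColor l × Multiset (SColor l × ℕ)

/-- Initial pair color: `1` on the diagonal, `0` off it. -/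
def initPairColor {V : Type*} (u v : V) : ℕ := if u = v then 1 else 0

/-- The SWL pair-coloring. -/
def swl {V : Type*} [Fintype V] (G : SimpleGraph V) :
    (l : ℕ) → V → V → SColor l
  | 0 => fun u v => initPairColor u v
  | l + 1 => fun u v =>
      (swl G l u v, Finset.univ.val.map fun w => (swl G l u w, atp G v w))

/-- SWL indistinguishability. -/
def SWLIndist {V W : Type*} [Fintype V] [Fintype W]
    (G : SimpleGraph V) (H : SimpleGraph W) : Prop :=
  ∀ l : ℕ,
    ((Finset.univ : Finset (V × V)).val.map fun p => swl G l p.1 p.2) =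
      ((Finset.univ : Finset (W × W)).val.map fun p => swl H l p.1 p.2)

/-- Round-`l` color type for PSWL. -/
def PSColor : ℕ → Type
  | 0 => ℕ
  | l + 1 => PSColor l × PSColor l × Multiset (PSColor l × ℕ)

/-- The PSWL pair-coloring. -/
def pswl {V : Type*} [Fintype V] (G : SimpleGraph V) :
    (l : ℕ) → V → V → PSColor l
  | 0 => fun u v => initPairColor u v
  | l + 1 => fun u v =>
      (pswl G l u v, pswl G l v v,
        Finset.univ.val.map fun w => (pswl G l u w, atp G v w))

/-- PSWL indistinguishability. -/
def PSWLIndist {V W : Type*} [Fintype V] [Fintype W]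
    (G : SimpleGraph V) (H : SimpleGraph W) : Prop :=
  ∀ l : ℕ,
    ((Finset.univ : Finset (V × V)).val.map fun p => pswl G l p.1 p.2) =
      ((Finset.univ : Finset (W × W)).val.map fun p => pswl H l p.1 p.2)

/-- Round-`l` color type for 3-WL; the initial color records which of
`u, v, w` coincide and which of the pairs are edges. -/
def W3Color : ℕ → Type
  | 0 => Bool × Bool × Bool × Bool × Bool × Bool
  | l + 1 => W3Color l × Multiset (W3Color l × W3Color l × W3Color l)

/-- The 3-WL triple-coloring. -/
def wl3 {V : Type*} [Fintype V] (G : SimpleGraph V) :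
    (l : ℕ) → V → V → V → W3Color l
  | 0 => fun u v w =>
      (decide (u = v), decide (u = w), decide (v = w),
        decide (G.Adj u v), decide (G.Adj u w), decide (G.Adj v w))
  | l + 1 => fun u v w =>
      (wl3 G l u v w,
        Finset.univ.val.map fun z =>
          (wl3 G l z v w, wl3 G l u z w, wl3 G l u v z))

/-- 3-WL indistinguishability. -/
def WL3Indist {V W : Type*} [Fintype V] [Fintype W]
    (G : SimpleGraph V) (H : SimpleGraph W) : Prop :=
  ∀ l : ℕ,
    ((Finset.univ : Finset (V × V × V)).val.map fun p => wl3 G l p.1 p.2.1 p.2.2) =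
      ((Finset.univ : Finset (W × W × W)).val.map fun p => wl3 H l p.1 p.2.1 p.2.2)

/-! ### Distances -/

/-- The shortest-path distance, valued in `ℕ∞`. -/
def spd {V : Type*} (G : SimpleGraph V) (u v : V) : ℕ∞ := G.edist u v

/-- The four Penrose conditions characterizing the Moore–Penrose
pseudoinverse `X` of `B`. -/
def IsMoorePenrose {n : Type*} [Fintype n] (B X : Matrix n n ℝ) : Prop :=
  B * X * B = B ∧ X * B * X = X ∧ (B * X)ᵀ = B * X ∧ (X * B)ᵀ = X * B

/-- Resistance distance computed from (a Moore–Penrose pseudoinverse of)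
the Laplacian: `X(u,u) + X(v,v) - 2X(u,v)` for vertices in the same
connected component, and `∞` otherwise. -/
def rdOf {V : Type*} (G : SimpleGraph V) (X : Matrix V V ℝ) (u v : V) :
    WithTop ℝ :=
  if G.Reachable u v then ((X u u + X v v - 2 * X u v : ℝ) : WithTop ℝ) else ⊤

/-- Matrix exponential, as the everywhere-convergent power series
`exp B = ∑ Bⁿ/n!`. -/
def matExp {V : Type*} [Fintype V] (B : Matrix V V ℝ) : Matrix V V ℝ :=
  ∑' n : ℕ, ((n.factorial : ℝ))⁻¹ • B ^ n

/-! ### Connectivity notions -/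

/-- Number of connected components. -/
def numComponents {V : Type*} (G : SimpleGraph V) : ℕ :=
  Nat.card G.ConnectedComponent

/-- A cut vertex: deleting it (and all incident edges) strictly increases
the number of connected components. -/
def IsCutVertex {V : Type*} (G : SimpleGraph V) (v : V) : Prop :=
  numComponents G < numComponents (G.induce {w : V | w ≠ v})

/-- A cut edge: it is an edge whose deletion strictly increases the number
of connected components. -/
def IsCutEdge {V : Type*} (G : SimpleGraph V) (e : Sym2 V) : Prop :=
  e ∈ G.edgeSet ∧ numComponents G < numComponents (G.deleteEdges {e})



section AuxMP
variable {n : Type*} [Fintype n]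

lemma mp_unique {B X X' : Matrix n n ℝ} (h : IsMoorePenrose B X)
    (h' : IsMoorePenrose B X') : X = X' := by
  obtain ⟨h1, h2, h3, h4⟩ := h
  obtain ⟨h1', h2', h3', h4'⟩ := h'
  have hBX : B * X = B * X' := by
    calc B * X = (B * X' * B) * X := by rw [h1']
    _ = (B * X') * (B * X) := by rw [Matrix.mul_assoc, Matrix.mul_assoc]
    _ = (B * X')ᵀ * (B * X)ᵀ := by rw [h3, h3']
    _ = X'ᵀ * (Bᵀ * Xᵀ * Bᵀ) := by
        rw [Matrix.transpose_mul, Matrix.transpose_mul, Matrix.mul_assoc, Matrix.mul_assoc]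
    _ = X'ᵀ * (B * X * B)ᵀ := by
        simp only [Matrix.transpose_mul, Matrix.mul_assoc]
    _ = (B * X')ᵀ := by rw [h1, Matrix.transpose_mul]
    _ = B * X' := h3'
  have hXB : X * B = X' * B := by
    calc X * B = X * (B * X' * B) := by rw [h1']
    _ = (X * B) * (X' * B) := by
        simp only [Matrix.mul_assoc]
    _ = (X * B)ᵀ * (X' * B)ᵀ := by rw [h4, h4']
    _ = (Bᵀ * Xᵀ * Bᵀ) * X'ᵀ := by
        simp only [Matrix.transpose_mul, Matrix.mul_assoc]
    _ = (B * X * B)ᵀ * X'ᵀ := by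
        simp only [Matrix.transpose_mul, Matrix.mul_assoc]
    _ = (X' * B)ᵀ := by rw [h1, Matrix.transpose_mul]
    _ = X' * B := h4'
  calc X = X * B * X := h2.symm
  _ = X * (B * X') := by rw [Matrix.mul_assoc, hBX]
  _ = (X * B) * X' := by rw [Matrix.mul_assoc]
  _ = X' * B * X' := by rw [hXB]
  _ = X' := h2'

lemma mp_symm {B X : Matrix n n ℝ} (hB : Bᵀ = B) (h : IsMoorePenrose B X) :
    Xᵀ = X := by
  refine mp_unique ?_ h
  obtain ⟨h1, h2, h3, h4⟩ := h
  refine ⟨?_, ?_, ?_, ?_⟩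
  · have := congrArg Matrix.transpose h1
    simpa [Matrix.transpose_mul, hB, Matrix.mul_assoc] using this
  · have := congrArg Matrix.transpose h2
    simpa [Matrix.transpose_mul, hB, Matrix.mul_assoc] using this
  · calc (B * Xᵀ)ᵀ = X * B := by simp [Matrix.transpose_mul, hB]
    _ = (X * B)ᵀ := h4.symm
    _ = B * Xᵀ := by simp [Matrix.transpose_mul, hB]
  · calc (Xᵀ * B)ᵀ = B * X := by simp [Matrix.transpose_mul, hB]
    _ = (B * X)ᵀ := h3.symm
    _ = Xᵀ * B := by simp [Matrix.transpose_mul, hB]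

end AuxMP

/-- On a connected graph with at least two vertices, the
resistance distance, expressed through the pseudoinverse of the Laplacian,
can also be expressed through the pseudoinverse of the normalized
Laplacian and vertex degrees. -/
theorem rd_via_normLap_pinv {V : Type*} [Fintype V]
    (G : SimpleGraph V) (hconn : G.Connected) (hcard : 1 < Fintype.card V)
    (X : Matrix V V ℝ) (hX : IsMoorePenrose (lapM G) X)
    (Y : Matrix V V ℝ) (hY : IsMoorePenrose (normLapM G) Y) :
    ∀ u v : V,
      X u u + X v v - 2 * X u v =
        ((G.degree u : ℝ))⁻¹ * Y u u + ((G.degree v : ℝ))⁻¹ * Y v v -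
          2 * (Real.sqrt ((G.degree u : ℝ) * (G.degree v : ℝ)))⁻¹ * Y u v := by
  classical
  intro u v
  haveI : Nonempty V := Fintype.card_pos_iff.mp (Nat.lt_of_lt_of_le Nat.zero_lt_one hcard.le)
  have hlap_eq : lapM G = G.lapMatrix ℝ := rfl
  have hNdef : normLapM G = invSqrtDegM G * lapM G * invSqrtDegM G := rfl
  have hdegpos : ∀ w : V, (0:ℝ) < (G.degree w : ℝ) := by
    intro w
    have hx : ∃ x, G.Adj w x := by
      obtain ⟨x, hx⟩ := Fintype.exists_ne_of_one_lt_card hcard w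
      obtain ⟨p⟩ := hconn.preconnected w x
      cases p with
      | nil => exact absurd rfl hx
      | cons h _ => exact ⟨_, h⟩
    exact_mod_cast (G.degree_pos_iff_exists_adj w).mpr hx
  set sq : V → ℝ := fun w => Real.sqrt ((G.degree w : ℝ)) with hsqdef
  have hsqpos : ∀ w, 0 < sq w := fun w => Real.sqrt_pos.mpr (hdegpos w)
  have hSdiag : invSqrtDegM G = Matrix.diagonal (fun w => (sq w)⁻¹) := rfl
  set T : Matrix V V ℝ := Matrix.diagonal sq with hT
  have hTS : T * invSqrtDegM G = 1 := by
    rw [hSdiag, hT, Matrix.diagonal_mul_diagonal]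
    have hfun : (fun w => sq w * (sq w)⁻¹) = fun _ => (1:ℝ) :=
      funext fun w => mul_inv_cancel₀ (hsqpos w).ne'
    rw [hfun, Matrix.diagonal_one]
  have hLsym : (lapM G)ᵀ = lapM G := by rw [hlap_eq]; exact G.isSymm_lapMatrix (R := ℝ)
  have hSsym : (invSqrtDegM G)ᵀ = invSqrtDegM G := by
    rw [hSdiag]; exact Matrix.diagonal_transpose _
  have hNsym : (normLapM G)ᵀ = normLapM G := by
    rw [hNdef]
    simp only [Matrix.transpose_mul, hSsym, hLsym, Matrix.mul_assoc]
  have hXsym : Xᵀ = X := mp_symm hLsym hX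
  have hYsym : Yᵀ = Y := mp_symm hNsym hY
  have hcommX : lapM G * X = X * lapM G := by
    calc lapM G * X = (X * lapM G)ᵀ := by rw [Matrix.transpose_mul, hLsym, hXsym]
    _ = X * lapM G := hX.2.2.2
  have hcommY : normLapM G * Y = Y * normLapM G := by
    calc normLapM G * Y = (Y * normLapM G)ᵀ := by rw [Matrix.transpose_mul, hNsym, hYsym]
    _ = Y * normLapM G := hY.2.2.2
  have hker : ∀ z : V → ℝ, lapM G *ᵥ z = 0 → ∀ i j, z i = z j := by
    intro z hz i j
    refine (G.lapMatrix_mulVec_eq_zero_iff_forall_reachable (x := z)).mp ?_ i j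
      (hconn.preconnected i j)
    exact hlap_eq ▸ hz
  have hL1 : lapM G *ᵥ (fun _ => (1:ℝ)) = 0 := by
    rw [hlap_eq]; exact G.lapMatrix_mulVec_const_eq_zero
  set f : V → ℝ := fun w => (if w = u then (1:ℝ) else 0) - (if w = v then 1 else 0) with hf
  have hmulf : ∀ M : Matrix V V ℝ, M *ᵥ f = fun i => M i u - M i v := by
    intro M; funext i
    simp [hf, Matrix.mulVec, dotProduct, mul_sub, Finset.sum_sub_distrib,
      mul_ite, mul_one, mul_zero]
  have hdotf : ∀ g : V → ℝ, f ⬝ᵥ g = g u - g v := by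
    intro g
    simp [hf, dotProduct, sub_mul, Finset.sum_sub_distrib, ite_mul, one_mul, zero_mul]
  have hsumf : ∑ i, f i = 0 := by
    simp [hf, Finset.sum_sub_distrib]
  have hsum_mulVec : ∀ w : V → ℝ, ∑ i, (lapM G *ᵥ w) i = 0 := by
    intro w
    have hv1 : (fun _ => (1:ℝ)) ᵥ* lapM G = 0 := by
      rw [← hLsym, Matrix.mulVec_transpose] at hL1
      exact hL1
    have h1 : (fun _ => (1:ℝ)) ⬝ᵥ (lapM G *ᵥ w) = 0 := by
      rw [Matrix.dotProduct_mulVec, hv1, zero_dotProduct]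
    simpa [dotProduct] using h1
  have hconst_zero : ∀ z : V → ℝ, (∀ i j, z i = z j) → (∑ i, z i) = 0 → z = 0 := by
    intro z hc hs
    funext i
    have hcc : ∑ j, z j = (Fintype.card V : ℝ) * z i := by
      rw [Finset.sum_congr rfl (fun j _ => hc j i)]
      simp [Finset.sum_const, nsmul_eq_mul, Finset.card_univ]
    have hcard0 : (0:ℝ) < (Fintype.card V : ℝ) := by
      exact_mod_cast Nat.lt_of_lt_of_le Nat.zero_lt_one hcard.le
    have := hcc.symm.trans hs
    have := mul_eq_zero.mp this
    rcases this with h | h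
    · exact absurd h hcard0.ne'
    · exact h
  -- (a) L (X f) = f
  have hLXf : lapM G *ᵥ (X *ᵥ f) = f := by
    have hLLX : lapM G * (lapM G * X) = lapM G := by
      rw [hcommX, ← Matrix.mul_assoc, hX.1]
    have hLg : lapM G *ᵥ (f - lapM G *ᵥ (X *ᵥ f)) = 0 := by
      rw [Matrix.mulVec_sub, Matrix.mulVec_mulVec, Matrix.mulVec_mulVec,
        Matrix.mul_assoc, hLLX, sub_self]
    have hgc := hker _ hLg
    have hgs : ∑ i, (f - lapM G *ᵥ (X *ᵥ f)) i = 0 := by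
      simp only [Pi.sub_apply, Finset.sum_sub_distrib, hsumf, hsum_mulVec, sub_zero]
    have hg0 := hconst_zero _ hgc hgs
    have := sub_eq_zero.mp hg0
    exact this.symm
  -- (b) N Y (S f) = S f
  have hLS_eq : lapM G * invSqrtDegM G = T * normLapM G := by
    rw [hNdef, ← Matrix.mul_assoc, ← Matrix.mul_assoc, hTS, Matrix.one_mul]
  have hSapp : ∀ z : V → ℝ, invSqrtDegM G *ᵥ z = fun i => (sq i)⁻¹ * z i := by
    intro z; funext i
    rw [hSdiag]
    exact Matrix.mulVec_diagonal _ _ _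
  have hNYw : normLapM G *ᵥ (Y *ᵥ (invSqrtDegM G *ᵥ f)) = invSqrtDegM G *ᵥ f := by
    obtain ⟨w0, hw0⟩ : ∃ w0, invSqrtDegM G *ᵥ f = w0 := ⟨_, rfl⟩
    rw [hw0]
    have hNNY : normLapM G * (normLapM G * Y) = normLapM G := by
      rw [hcommY, ← Matrix.mul_assoc, hY.1]
    obtain ⟨g0, hg0def⟩ : ∃ g0, w0 - normLapM G *ᵥ (Y *ᵥ w0) = g0 := ⟨_, rfl⟩
    have hNg : normLapM G *ᵥ g0 = 0 := by
      rw [← hg0def, Matrix.mulVec_sub, Matrix.mulVec_mulVec, Matrix.mulVec_mulVec,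
        Matrix.mul_assoc, hNNY, sub_self]
    have hLSg : lapM G *ᵥ (invSqrtDegM G *ᵥ g0) = 0 := by
      rw [Matrix.mulVec_mulVec, hLS_eq, ← Matrix.mulVec_mulVec, hNg, Matrix.mulVec_zero]
    have hconstg := hker _ hLSg
    have hS1 : invSqrtDegM G *ᵥ sq = fun _ => (1:ℝ) := by
      rw [hSapp]; funext i; exact inv_mul_cancel₀ (hsqpos i).ne'
    have hNq : normLapM G *ᵥ sq = 0 := by
      rw [hNdef, ← Matrix.mulVec_mulVec, hS1, ← Matrix.mulVec_mulVec, hL1,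
        Matrix.mulVec_zero]
    have hqN : ∀ z : V → ℝ, sq ⬝ᵥ (normLapM G *ᵥ z) = 0 := by
      intro z
      rw [Matrix.dotProduct_mulVec, show sq ᵥ* normLapM G = 0 from by
        rw [← hNsym, Matrix.mulVec_transpose] at hNq; exact hNq, zero_dotProduct]
    have hqw : sq ⬝ᵥ w0 = 0 := by
      rw [← hw0, hSapp]
      have hcan : ∀ i, sq i * ((sq i)⁻¹ * f i) = f i := by
        intro i; rw [← mul_assoc, mul_inv_cancel₀ (hsqpos i).ne', one_mul]
      simpa [dotProduct, hcan] using hsumf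
    have hqg : sq ⬝ᵥ g0 = 0 := by
      rw [← hg0def, dotProduct_sub, hqw, hqN, sub_zero]
    have hgj : ∀ j, g0 j = sq j * ((sq u)⁻¹ * g0 u) := by
      intro j
      have h2 : (sq j)⁻¹ * g0 j = (sq u)⁻¹ * g0 u := by
        have h2' := hconstg j u
        simp only [hSapp] at h2'
        exact h2'
      have h3 : g0 j = sq j * ((sq j)⁻¹ * g0 j) := by
        rw [← mul_assoc, mul_inv_cancel₀ (hsqpos j).ne', one_mul]
      rw [h3, h2]
    have hsum : (∑ j, sq j * sq j) * ((sq u)⁻¹ * g0 u) = 0 := by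
      rw [Finset.sum_mul, ← hqg]
      simp only [dotProduct]
      refine Finset.sum_congr rfl fun j _ => ?_
      rw [hgj j]
      ring
    have hpos : 0 < ∑ j, sq j * sq j :=
      Finset.sum_pos (fun j _ => mul_pos (hsqpos j) (hsqpos j)) Finset.univ_nonempty
    have hc0 : (sq u)⁻¹ * g0 u = 0 := by
      rcases mul_eq_zero.mp hsum with h | h
      · exact absurd h hpos.ne'
      · exact h
    have hgz : g0 = 0 := by
      funext j; rw [hgj j, hc0, mul_zero]; rfl
    rw [hgz] at hg0def
    exact (sub_eq_zero.mp hg0def).symm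
  -- L ((S Y S) f) = f
  have hLMf : lapM G *ᵥ ((invSqrtDegM G * Y * invSqrtDegM G) *ᵥ f) = f := by
    calc lapM G *ᵥ ((invSqrtDegM G * Y * invSqrtDegM G) *ᵥ f)
        = (lapM G * invSqrtDegM G) *ᵥ (Y *ᵥ (invSqrtDegM G *ᵥ f)) := by
          simp only [Matrix.mulVec_mulVec, Matrix.mul_assoc]
    _ = T *ᵥ (normLapM G *ᵥ (Y *ᵥ (invSqrtDegM G *ᵥ f))) := by
          rw [hLS_eq, ← Matrix.mulVec_mulVec]
    _ = T *ᵥ (invSqrtDegM G *ᵥ f) := by rw [hNYw]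
    _ = (T * invSqrtDegM G) *ᵥ f := Matrix.mulVec_mulVec _ _ _
    _ = f := by rw [hTS, Matrix.one_mulVec]
  -- combine
  have hLh : lapM G *ᵥ (X *ᵥ f - (invSqrtDegM G * Y * invSqrtDegM G) *ᵥ f) = 0 := by
    rw [Matrix.mulVec_sub, hLXf, hLMf, sub_self]
  have hhc := hker _ hLh
  have key : f ⬝ᵥ (X *ᵥ f) = f ⬝ᵥ ((invSqrtDegM G * Y * invSqrtDegM G) *ᵥ f) := by
    have h0 : f ⬝ᵥ (X *ᵥ f - (invSqrtDegM G * Y * invSqrtDegM G) *ᵥ f) = 0 := by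
      rw [hdotf]
      exact sub_eq_zero.mpr (hhc u v)
    rw [dotProduct_sub] at h0
    linarith
  -- final algebra
  have hXvu : X v u = X u v := by
    have h := congrFun (congrFun hXsym v) u
    rw [Matrix.transpose_apply] at h
    exact h.symm
  have hYvu : Y v u = Y u v := by
    have h := congrFun (congrFun hYsym v) u
    rw [Matrix.transpose_apply] at h
    exact h.symm
  have hfX : f ⬝ᵥ (X *ᵥ f) = X u u + X v v - 2 * X u v := by
    rw [hmulf, hdotf, hXvu]; ring
  have hM : ∀ i j, (invSqrtDegM G * Y * invSqrtDegM G) i j = (sq i)⁻¹ * Y i j * (sq j)⁻¹ := by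
    intro i j
    rw [hSdiag, Matrix.mul_diagonal, Matrix.diagonal_mul]
  have hfM : f ⬝ᵥ ((invSqrtDegM G * Y * invSqrtDegM G) *ᵥ f) =
      ((sq u)⁻¹ * Y u u * (sq u)⁻¹ - (sq u)⁻¹ * Y u v * (sq v)⁻¹) -
        ((sq v)⁻¹ * Y u v * (sq u)⁻¹ - (sq v)⁻¹ * Y v v * (sq v)⁻¹) := by
    rw [hmulf, hdotf, hM, hM, hM, hM, hYvu]
  have h1 : sq u * sq u = (G.degree u : ℝ) := Real.mul_self_sqrt (hdegpos u).le
  have h2 : sq v * sq v = (G.degree v : ℝ) := Real.mul_self_sqrt (hdegpos v).le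
  have h3 : sq u * sq v = Real.sqrt ((G.degree u : ℝ) * (G.degree v : ℝ)) :=
    (Real.sqrt_mul (hdegpos u).le _).symm
  calc X u u + X v v - 2 * X u v = f ⬝ᵥ (X *ᵥ f) := hfX.symm
  _ = f ⬝ᵥ ((invSqrtDegM G * Y * invSqrtDegM G) *ᵥ f) := key
  _ = ((sq u)⁻¹ * Y u u * (sq u)⁻¹ - (sq u)⁻¹ * Y u v * (sq v)⁻¹) -
        ((sq v)⁻¹ * Y u v * (sq u)⁻¹ - (sq v)⁻¹ * Y v v * (sq v)⁻¹) := hfM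
  _ = ((G.degree u : ℝ))⁻¹ * Y u u + ((G.degree v : ℝ))⁻¹ * Y v v -
          2 * (Real.sqrt ((G.degree u : ℝ) * (G.degree v : ℝ)))⁻¹ * Y u v := by
      rw [← h3, ← h1, ← h2, mul_inv, mul_inv, mul_inv]
      ring

end EPWL
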